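/- Let A = kQ/I be a cluster-tilted algebra of type A whose quiver contains arrows α_i : i → i+1, γ : i+1 → d_1, β : d_1 → i forming a saturated oriented 3-cycle, where d_1 has valency two in Q (its only adjacent arrows are β and γ). If Δ is an open Frobenius structure on A with Δ(β) = Δ(γ) = 0, then Δ(e_{d_1}) = Σ_{ρ,μ} A_{ρμ} (βρ) ⊗ (μγ), the sum ranging over paths ρ with source i and paths μ with target i+1 (including trivial paths), for some scalars A_{ρμ} ∈ k. In particular, if the quiver is linearly oriented near the cycle, i.e. the only other arrows at i and i+1 are i−1 → i and i+1 → i+2, then Δ(e_{d_1}) = A · (β ⊗ γ) for some A ∈ k. -/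

import Mathlib

open scoped TensorProduct

namespace CTA

/-! ### Open Frobenius structures -/

/-- A linear map `Δ : A → A ⊗ A` is an open Frobenius structure if it is a morphism of
`A`-bimodules, i.e. `Δ(xy) = (x ⊗ 1)·Δ(y) = Δ(x)·(1 ⊗ y)`. -/
def IsOpenFrobenius (k : Type) [CommSemiring k] (A : Type) [Ring A] [Algebra k A]
    (Δ : A →ₗ[k] A ⊗[k] A) : Prop :=
  ∀ x y : A, Δ (x * y) = (x ⊗ₜ[k] (1 : A)) * Δ y ∧ Δ (x * y) = Δ x * ((1 : A) ⊗ₜ[k] y)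

/-- The Frobenius space of an algebra: the space of all open Frobenius structures. -/
def FrobSpace (k : Type) [CommSemiring k] (A : Type) [Ring A] [Algebra k A] :
    Submodule k (A →ₗ[k] A ⊗[k] A) where
  carrier := {Δ | IsOpenFrobenius k A Δ}
  zero_mem' := by intro x y; exact ⟨by simp, by simp⟩
  add_mem' := by
    intro Δ₁ Δ₂ h₁ h₂ x y
    refine ⟨?_, ?_⟩
    · simp only [LinearMap.add_apply, (h₁ x y).1, (h₂ x y).1, mul_add]
    · simp only [LinearMap.add_apply, (h₁ x y).2, (h₂ x y).2, add_mul]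
  smul_mem' := by
    intro c Δ h x y
    refine ⟨?_, ?_⟩
    · simp only [LinearMap.smul_apply, (h x y).1, mul_smul_comm]
    · simp only [LinearMap.smul_apply, (h x y).2, smul_mul_assoc]

/-- The Frobenius dimension of an algebra. -/
noncomputable def frobDim (k : Type) [Field k] (A : Type) [Ring A] [Algebra k A] : ℕ :=
  Module.finrank k ↥(FrobSpace k A)

/-! ### Quivers given by an arrow relation, and their path algebras -/

/-- Arrows of the quiver with vertex set `V` given by the relation `Arr`. -/
abbrev Edge (V : Type) (Arr : V → V → Prop) : Type := {p : V × V // Arr p.1 p.2}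

/-- The free algebra on generators: one for each vertex and one for each arrow. -/
abbrev Gen (k : Type) [Field k] (V : Type) (Arr : V → V → Prop) : Type :=
  FreeAlgebra k (V ⊕ Edge V Arr)

/-- Generator corresponding to a vertex (it will become the stationary path `e_v`). -/
noncomputable def genV (k : Type) [Field k] {V : Type} {Arr : V → V → Prop} (v : V) :
    Gen k V Arr :=
  FreeAlgebra.ι k (Sum.inl v)

/-- Generator corresponding to an arrow. -/
noncomputable def genE (k : Type) [Field k] {V : Type} {Arr : V → V → Prop} (a : Edge V Arr) :
    Gen k V Arr :=
  FreeAlgebra.ι k (Sum.inr a)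

/-- Paths in the quiver. -/
inductive Pth {V : Type} (Arr : V → V → Prop) : V → V → Type
  | nil (v : V) : Pth Arr v v
  | cons {u v w : V} (h : Arr u v) (p : Pth Arr v w) : Pth Arr u w

/-- Length of a path. -/
def Pth.length {V : Type} {Arr : V → V → Prop} : ∀ {u v : V}, Pth Arr u v → ℕ
  | _, _, .nil _ => 0
  | _, _, .cons _ p => Pth.length p + 1

/-- The path passes through the vertex `c`. -/
def Pth.Through {V : Type} {Arr : V → V → Prop} (c : V) : ∀ {u v : V}, Pth Arr u v → Prop
  | _, _, .nil v => v = c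
  | u, _, .cons _ p => u = c ∨ Pth.Through c p

/-- The element of the free algebra corresponding to a path. -/
noncomputable def pathGen (k : Type) [Field k] {V : Type} {Arr : V → V → Prop} :
    ∀ {u v : V}, Pth Arr u v → Gen k V Arr
  | _, _, .nil v => genV k v
  | _, _, @Pth.cons _ _ u v _ h p => genE k (⟨(u, v), h⟩ : Edge V Arr) * pathGen k p

/-- The defining relations of the path algebra: the `genV v` are orthogonal idempotents
summing to `1`, and each arrow is compatible with its endpoints. -/
inductive QuiverRel (k : Type) [Field k] (V : Type) [Fintype V] [DecidableEq V]
    (Arr : V → V → Prop) : Gen k V Arr → Gen k V Arr → Prop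
  | idem (u v : V) :
      QuiverRel k V Arr (genV k u * genV k v) (if u = v then genV k u else 0)
  | unit : QuiverRel k V Arr (∑ v : V, genV k v) 1
  | src (a : Edge V Arr) : QuiverRel k V Arr (genV k a.1.1 * genE k a) (genE k a)
  | tgt (a : Edge V Arr) : QuiverRel k V Arr (genE k a * genV k a.1.2) (genE k a)

/-- Relations of the bound quiver algebra `kQ/I`: the path algebra relations together with
the vanishing of every element of the set `R` of relations generating `I`. -/
inductive BoundRel (k : Type) [Field k] (V : Type) [Fintype V] [DecidableEq V]
    (Arr : V → V → Prop) (R : Set (Gen k V Arr)) : Gen k V Arr → Gen k V Arr → Prop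
  | quiver {x y : Gen k V Arr} : QuiverRel k V Arr x y → BoundRel k V Arr R x y
  | rel {x : Gen k V Arr} : x ∈ R → BoundRel k V Arr R x 0

/-- The bound quiver algebra `kQ/I`, where `I` is the two-sided ideal generated by `R`. -/
abbrev Alg (k : Type) [Field k] (V : Type) [Fintype V] [DecidableEq V]
    (Arr : V → V → Prop) (R : Set (Gen k V Arr)) : Type :=
  RingQuot (BoundRel k V Arr R)

/-- The stationary path (idempotent) at a vertex. -/
noncomputable def e (k : Type) [Field k] (V : Type) [Fintype V] [DecidableEq V]
    (Arr : V → V → Prop) (R : Set (Gen k V Arr)) (v : V) : Alg k V Arr R :=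
  RingQuot.mkAlgHom k (BoundRel k V Arr R) (genV k v)

/-- The class of an arrow in the bound quiver algebra. -/
noncomputable def arrEl (k : Type) [Field k] (V : Type) [Fintype V] [DecidableEq V]
    (Arr : V → V → Prop) (R : Set (Gen k V Arr)) (a : Edge V Arr) : Alg k V Arr R :=
  RingQuot.mkAlgHom k (BoundRel k V Arr R) (genE k a)

/-- The class of a path in the bound quiver algebra. -/
noncomputable def pathEl (k : Type) [Field k] (V : Type) [Fintype V] [DecidableEq V]
    (Arr : V → V → Prop) (R : Set (Gen k V Arr)) {u v : V} (p : Pth Arr u v) :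
    Alg k V Arr R :=
  RingQuot.mkAlgHom k (BoundRel k V Arr R) (pathGen k p)

/-! ### Combinatorics of quivers -/

/-- The underlying (simple) graph of the quiver. -/
def graph (V : Type) (Arr : V → V → Prop) : SimpleGraph V := SimpleGraph.fromRel Arr

/-- Valency of a vertex: the number of incident edges in the underlying graph. -/
noncomputable def valency (V : Type) (Arr : V → V → Prop) (v : V) : ℕ :=
  ((graph V Arr).neighborSet v).ncard

/-- `u → v → w → u` is an oriented 3-cycle. -/
def Tri {V : Type} (Arr : V → V → Prop) (u v w : V) : Prop :=
  Arr u v ∧ Arr v w ∧ Arr w u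

/-- The (unoriented) edge between `u` and `v` belongs to some oriented 3-cycle. -/
def EdgeIn3 {V : Type} (Arr : V → V → Prop) (u v : V) : Prop :=
  ∃ w, Tri Arr u v w ∨ Tri Arr v u w

/-- The vertex `v` lies on an oriented 3-cycle. -/
def On3Cycle {V : Type} (Arr : V → V → Prop) (v : V) : Prop := ∃ u w, Tri Arr v u w

/-- The local conditions describing the quivers in the mutation class of type `𝔸`
(Buan–Vatne): no loops and no 2-cycles, all non-trivial cycles of the underlying graph are
3-cycles, every vertex has valency at most four, a valency-four vertex has its four edges
in two oriented 3-cycles, a valency-three vertex has two of its edges in an oriented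
3-cycle and the third in no oriented 3-cycle. -/
structure IsTypeAShape {V : Type} (Arr : V → V → Prop) : Prop where
  irrefl : ∀ v, ¬ Arr v v
  no_two_cycle : ∀ u v, Arr u v → ¬ Arr v u
  cycles_are_3 : ∀ (v : V) (w : (graph V Arr).Walk v v), w.IsCycle → w.length = 3
  valency_le_four : ∀ v, valency V Arr v ≤ 4
  valency_four : ∀ v, valency V Arr v = 4 → ∃ x y z w : V,
    (graph V Arr).neighborSet v = {x, y, z, w} ∧ Tri Arr v x y ∧ Tri Arr v z w
  valency_three : ∀ v, valency V Arr v = 3 → ∃ x y z : V,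
    (graph V Arr).neighborSet v = {x, y, z} ∧ Tri Arr v x y ∧ ¬ EdgeIn3 Arr v z

/-- A quiver is in the mutation class of type `𝔸` iff it moreover is connected. -/
def IsTypeA {V : Type} (Arr : V → V → Prop) : Prop :=
  IsTypeAShape Arr ∧ (graph V Arr).Connected

/-- A connecting vertex: valency one, or valency two and lying on an oriented 3-cycle. -/
def Connecting (V : Type) (Arr : V → V → Prop) (c : V) : Prop :=
  valency V Arr c = 1 ∨ (valency V Arr c = 2 ∧ On3Cycle Arr c)

/-- The set of relations saturating every oriented 3-cycle: all composites of two
consecutive arrows of oriented 3-cycles. -/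
def satSet (k : Type) [Field k] (V : Type) (Arr : V → V → Prop) : Set (Gen k V Arr) :=
  { x | ∃ u v w, ∃ (h₁ : Arr u v) (h₂ : Arr v w), Arr w u ∧
      x = genE k (⟨(u, v), h₁⟩ : Edge V Arr) * genE k (⟨(v, w), h₂⟩ : Edge V Arr) }

/-- Composites of two consecutive arrows of oriented 3-cycles avoiding the set `S`. -/
def satSetAvoid (k : Type) [Field k] (V : Type) (Arr : V → V → Prop) (S : Set V) :
    Set (Gen k V Arr) :=
  { x | ∃ u v w, u ∉ S ∧ v ∉ S ∧ w ∉ S ∧ ∃ (h₁ : Arr u v) (h₂ : Arr v w), Arr w u ∧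
      x = genE k (⟨(u, v), h₁⟩ : Edge V Arr) * genE k (⟨(v, w), h₂⟩ : Edge V Arr) }

/-- The cluster-tilted algebra of type `𝔸` attached to a quiver: every oriented 3-cycle
is saturated. -/
abbrev ctAlg (k : Type) [Field k] (V : Type) [Fintype V] [DecidableEq V]
    (Arr : V → V → Prop) : Type :=
  Alg k V Arr (satSet k V Arr)

/-- A special vertex: valency two, and the two arrows through it compose to zero in the
bound quiver algebra. -/
def Special (k : Type) [Field k] (V : Type) [Fintype V] [DecidableEq V]
    (Arr : V → V → Prop) (R : Set (Gen k V Arr)) (v : V) : Prop :=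
  valency V Arr v = 2 ∧ ∃ u w, ∃ (h₁ : Arr u v) (h₂ : Arr v w),
    arrEl k V Arr R (⟨(u, v), h₁⟩ : Edge V Arr) *
      arrEl k V Arr R (⟨(v, w), h₂⟩ : Edge V Arr) = 0

/-- An admissible endpoint of a basis path: a special vertex, or a vertex of valency one
(a source or sink of valency one). -/
def Good (k : Type) [Field k] (V : Type) [Fintype V] [DecidableEq V]
    (Arr : V → V → Prop) (R : Set (Gen k V Arr)) (v : V) : Prop :=
  Special k V Arr R v ∨ valency V Arr v = 1

/-- The set of basis paths: non-trivial paths, nonzero in the algebra, whose endpoints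
are special vertices or sources/sinks of valency one. -/
def basisPaths (k : Type) [Field k] (V : Type) [Fintype V] [DecidableEq V]
    (Arr : V → V → Prop) (R : Set (Gen k V Arr)) : Set (Σ u v : V, Pth Arr u v) :=
  { p | 0 < p.2.2.length ∧ pathEl k V Arr R p.2.2 ≠ 0 ∧
      Good k V Arr R p.1 ∧ Good k V Arr R p.2.1 }

/-- `ℓ_{→ b}`: the length of the longest path with target `b` not lying in `I`. -/
noncomputable def ellTo (k : Type) [Field k] (V : Type) [Fintype V] [DecidableEq V]
    (Arr : V → V → Prop) (R : Set (Gen k V Arr)) (b : V) : ℕ :=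
  sSup {n | ∃ u, ∃ p : Pth Arr u b, p.length = n ∧ pathEl k V Arr R p ≠ 0}

/-- `ℓ_{← b}`: the length of the longest path with source `b` not lying in `I`. -/
noncomputable def ellFrom (k : Type) [Field k] (V : Type) [Fintype V] [DecidableEq V]
    (Arr : V → V → Prop) (R : Set (Gen k V Arr)) (b : V) : ℕ :=
  sSup {n | ∃ v, ∃ p : Pth Arr b v, p.length = n ∧ pathEl k V Arr R p ≠ 0}

/-- `#_{← z} = dim_k (e_z · A) − 1`: the number of non-trivial paths with source `z`. -/
noncomputable def numFrom (k : Type) [Field k] (V : Type) [Fintype V] [DecidableEq V]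
    (Arr : V → V → Prop) (R : Set (Gen k V Arr)) (z : V) : ℕ :=
  Module.finrank k ↥(LinearMap.range (LinearMap.mulLeft k (e k V Arr R z))) - 1

/-- `#_{→ z} = dim_k (A · e_z) − 1`: the number of non-trivial paths with target `z`. -/
noncomputable def numTo (k : Type) [Field k] (V : Type) [Fintype V] [DecidableEq V]
    (Arr : V → V → Prop) (R : Set (Gen k V Arr)) (z : V) : ℕ :=
  Module.finrank k ↥(LinearMap.range (LinearMap.mulRight k (e k V Arr R z))) - 1

end CTA

section Aux
open CTA

variable {k : Type} [Field k] {V : Type} [Fintype V] [DecidableEq V] {Arr : V → V → Prop}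
variable {R : Set (Gen k V Arr)}

lemma CTAe_mul_e (u v : V) :
    e k V Arr R u * e k V Arr R v = if u = v then e k V Arr R u else 0 := by
  have h := RingQuot.mkAlgHom_rel k (s := BoundRel k V Arr R)
    (BoundRel.quiver (QuiverRel.idem u v))
  rw [map_mul] at h
  have h2 : e k V Arr R u * e k V Arr R v =
      RingQuot.mkAlgHom k (BoundRel k V Arr R) (if u = v then genV k u else 0) := h
  rw [h2, apply_ite (RingQuot.mkAlgHom k (BoundRel k V Arr R)), map_zero]
  rfl

lemma CTAe_mul_arr (a : Edge V Arr) :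
    e k V Arr R a.1.1 * arrEl k V Arr R a = arrEl k V Arr R a := by
  have h := RingQuot.mkAlgHom_rel k (s := BoundRel k V Arr R)
    (BoundRel.quiver (QuiverRel.src a))
  rw [map_mul] at h
  exact h

lemma CTAarr_mul_e (a : Edge V Arr) :
    arrEl k V Arr R a * e k V Arr R a.1.2 = arrEl k V Arr R a := by
  have h := RingQuot.mkAlgHom_rel k (s := BoundRel k V Arr R)
    (BoundRel.quiver (QuiverRel.tgt a))
  rw [map_mul] at h
  exact h

lemma CTAe_mul_arr_ne {u : V} (a : Edge V Arr) (h : u ≠ a.1.1) :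
    e k V Arr R u * arrEl k V Arr R a = 0 := by
  rw [← CTAe_mul_arr a, ← mul_assoc, CTAe_mul_e, if_neg h, zero_mul]

lemma CTAarr_mul_e_ne {u : V} (a : Edge V Arr) (h : a.1.2 ≠ u) :
    arrEl k V Arr R a * e k V Arr R u = 0 := by
  rw [← CTAarr_mul_e a, mul_assoc, CTAe_mul_e, if_neg h, mul_zero]

lemma CTApathEl_nil (v : V) :
    pathEl k V Arr R (Pth.nil (Arr := Arr) v) = e k V Arr R v := rfl

lemma CTApathEl_cons {u v w : V} (h : Arr u v) (p : Pth Arr v w) :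
    pathEl k V Arr R (Pth.cons h p) =
      arrEl k V Arr R ⟨(u, v), h⟩ * pathEl k V Arr R p := by
  show RingQuot.mkAlgHom k (BoundRel k V Arr R) (genE k ⟨(u, v), h⟩ * pathGen k p) = _
  rw [map_mul]; rfl

lemma CTAarrEl_eq_pathEl (a : Edge V Arr) :
    arrEl k V Arr R a = pathEl k V Arr R (Pth.cons a.2 (Pth.nil a.1.2)) := by
  rw [CTApathEl_cons, CTApathEl_nil]
  exact (CTAarr_mul_e a).symm

lemma CTAe_mul_pathEl {u v : V} (p : Pth Arr u v) :
    e k V Arr R u * pathEl k V Arr R p = pathEl k V Arr R p := by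
  cases p with
  | nil => rw [CTApathEl_nil, CTAe_mul_e, if_pos rfl]
  | cons h p' => rw [CTApathEl_cons, ← mul_assoc, CTAe_mul_arr ⟨(_, _), h⟩]

lemma CTAe_mul_pathEl_ne {u' u v : V} (p : Pth Arr u v) (h : u' ≠ u) :
    e k V Arr R u' * pathEl k V Arr R p = 0 := by
  cases p with
  | nil => rw [CTApathEl_nil, CTAe_mul_e, if_neg h]
  | cons h' p' =>
      rw [CTApathEl_cons, ← mul_assoc, CTAe_mul_arr_ne ⟨(_, _), h'⟩ h, zero_mul]

lemma CTApathEl_mul_e {u v : V} (p : Pth Arr u v) :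
    pathEl k V Arr R p * e k V Arr R v = pathEl k V Arr R p := by
  induction p with
  | nil => rw [CTApathEl_nil, CTAe_mul_e, if_pos rfl]
  | cons h' p' ih => rw [CTApathEl_cons, mul_assoc, ih]

/-- Concatenation of paths. -/
def pthAppend {V : Type} {Arr : V → V → Prop} {u v w : V} :
    Pth Arr u v → Pth Arr v w → Pth Arr u w
  | .nil _, q => q
  | .cons h p, q => .cons h (pthAppend p q)

lemma CTApathEl_append {u v w : V} (p : Pth Arr u v) (q : Pth Arr v w) :
    pathEl k V Arr R (pthAppend p q) = pathEl k V Arr R p * pathEl k V Arr R q := by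
  induction p with
  | nil => rw [pthAppend, CTApathEl_nil, CTAe_mul_pathEl]
  | cons h p' ih => rw [pthAppend, CTApathEl_cons, CTApathEl_cons, ih, mul_assoc]

/-- The span of (classes of) paths with source `u`. -/
noncomputable def Mfrom (k : Type) [Field k] {V : Type} [Fintype V] [DecidableEq V]
    (Arr : V → V → Prop) (R : Set (Gen k V Arr)) (u : V) : Submodule k (Alg k V Arr R) :=
  Submodule.span k {x | ∃ (v : V) (p : Pth Arr u v), x = pathEl k V Arr R p}

/-- The span of (classes of) paths with target `u`. -/
noncomputable def Nto (k : Type) [Field k] {V : Type} [Fintype V] [DecidableEq V]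
    (Arr : V → V → Prop) (R : Set (Gen k V Arr)) (u : V) : Submodule k (Alg k V Arr R) :=
  Submodule.span k {x | ∃ (w : V) (p : Pth Arr w u), x = pathEl k V Arr R p}

lemma CTApathEl_mem_Mfrom {u v : V} (p : Pth Arr u v) :
    pathEl k V Arr R p ∈ Mfrom k Arr R u :=
  Submodule.subset_span ⟨v, p, rfl⟩

lemma CTApathEl_mem_Nto {w u : V} (p : Pth Arr w u) :
    pathEl k V Arr R p ∈ Nto k Arr R u :=
  Submodule.subset_span ⟨w, p, rfl⟩

lemma CTAe_mem_Mfrom (u : V) : e k V Arr R u ∈ Mfrom k Arr R u := by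
  rw [← CTApathEl_nil u]; exact CTApathEl_mem_Mfrom _

lemma CTAe_mem_Nto (u : V) : e k V Arr R u ∈ Nto k Arr R u := by
  rw [← CTApathEl_nil u]; exact CTApathEl_mem_Nto _

lemma CTAarr_mul_Mfrom {u v : V} (h : Arr u v) {x : Alg k V Arr R}
    (hx : x ∈ Mfrom k Arr R v) :
    arrEl k V Arr R ⟨(u, v), h⟩ * x ∈ Mfrom k Arr R u := by
  induction hx using Submodule.span_induction with
  | mem x hx =>
    obtain ⟨w, p, rfl⟩ := hx
    rw [← CTApathEl_cons]
    exact CTApathEl_mem_Mfrom _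
  | zero => rw [mul_zero]; exact zero_mem _
  | add x y _ _ hx hy => rw [mul_add]; exact add_mem hx hy
  | smul a x _ hx => rw [mul_smul_comm]; exact Submodule.smul_mem _ _ hx

lemma CTAarr_mul_Nto {w v₁ u : V} (h : Arr w v₁) {x : Alg k V Arr R}
    (hx : x ∈ Nto k Arr R u) :
    arrEl k V Arr R ⟨(w, v₁), h⟩ * x ∈ Nto k Arr R u := by
  induction hx using Submodule.span_induction with
  | mem x hx =>
    obtain ⟨w', p, rfl⟩ := hx
    by_cases hw : v₁ = w'
    · subst hw
      rw [← CTApathEl_cons]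
      exact CTApathEl_mem_Nto _
    · rw [← CTAe_mul_pathEl p, ← mul_assoc, CTAarr_mul_e_ne ⟨(w, v₁), h⟩ hw, zero_mul]
      exact zero_mem _
  | zero => rw [mul_zero]; exact zero_mem _
  | add x y _ _ hx hy => rw [mul_add]; exact add_mem hx hy
  | smul a x _ hx => rw [mul_smul_comm]; exact Submodule.smul_mem _ _ hx

lemma CTApathEl_mul_mem {u v : V} (p : Pth Arr u v) (y : Alg k V Arr R)
    (hy : ∀ u', e k V Arr R u' * y ∈ Mfrom k Arr R u') :
    pathEl k V Arr R p * y ∈ Mfrom k Arr R u := by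
  induction p with
  | nil => rw [CTApathEl_nil]; exact hy _
  | cons h p' ih => rw [CTApathEl_cons, mul_assoc]; exact CTAarr_mul_Mfrom h ih

lemma CTAmem_Mfrom_mul {u : V} {x : Alg k V Arr R} (hx : x ∈ Mfrom k Arr R u)
    (y : Alg k V Arr R) (hy : ∀ u', e k V Arr R u' * y ∈ Mfrom k Arr R u') :
    x * y ∈ Mfrom k Arr R u := by
  induction hx using Submodule.span_induction with
  | mem x hx =>
    obtain ⟨w, p, rfl⟩ := hx
    exact CTApathEl_mul_mem p _ hy
  | zero => rw [zero_mul]; exact zero_mem _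
  | add x y _ _ hx hy => rw [add_mul]; exact add_mem hx hy
  | smul a x _ hx => rw [smul_mul_assoc]; exact Submodule.smul_mem _ _ hx

lemma CTAe_mul_mk (g : Gen k V Arr) :
    ∀ u, e k V Arr R u * RingQuot.mkAlgHom k (BoundRel k V Arr R) g ∈ Mfrom k Arr R u := by
  induction g using FreeAlgebra.induction with
  | grade0 r =>
    intro u
    rw [AlgHom.commutes, Algebra.algebraMap_eq_smul_one, mul_smul_comm, mul_one]
    exact Submodule.smul_mem _ _ (CTAe_mem_Mfrom u)
  | grade1 x =>
    intro u
    cases x with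
    | inl v =>
      show e k V Arr R u * e k V Arr R v ∈ _
      rw [CTAe_mul_e]
      split
      · next hh => subst hh; exact CTAe_mem_Mfrom u
      · exact zero_mem _
    | inr a =>
      show e k V Arr R u * arrEl k V Arr R a ∈ _
      by_cases hu : u = a.1.1
      · subst hu
        rw [CTAe_mul_arr a, CTAarrEl_eq_pathEl a]
        exact CTApathEl_mem_Mfrom _
      · rw [CTAe_mul_arr_ne a hu]; exact zero_mem _
  | mul g₁ g₂ ih₁ ih₂ =>
    intro u
    rw [map_mul, ← mul_assoc]
    exact CTAmem_Mfrom_mul (ih₁ u) _ ih₂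
  | add g₁ g₂ ih₁ ih₂ =>
    intro u
    rw [map_add, mul_add]
    exact add_mem (ih₁ u) (ih₂ u)

lemma CTAe_mul_mem (u : V) (x : Alg k V Arr R) :
    e k V Arr R u * x ∈ Mfrom k Arr R u := by
  obtain ⟨g, rfl⟩ := RingQuot.mkAlgHom_surjective k (BoundRel k V Arr R) x
  exact CTAe_mul_mk g u

lemma CTANto_mul_pathEl {w u : V} {x : Alg k V Arr R} (hx : x ∈ Nto k Arr R w)
    (p : Pth Arr w u) : x * pathEl k V Arr R p ∈ Nto k Arr R u := by
  induction hx using Submodule.span_induction with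
  | mem x hx =>
    obtain ⟨w', q, rfl⟩ := hx
    rw [← CTApathEl_append]
    exact CTApathEl_mem_Nto _
  | zero => rw [zero_mul]; exact zero_mem _
  | add x y _ _ hx hy => rw [add_mul]; exact add_mem hx hy
  | smul a x _ hx => rw [smul_mul_assoc]; exact Submodule.smul_mem _ _ hx

lemma CTAmk_mul_pathEl_mem {w u : V} (p : Pth Arr w u) (y : Alg k V Arr R)
    (hy : ∀ u', y * e k V Arr R u' ∈ Nto k Arr R u') :
    y * pathEl k V Arr R p ∈ Nto k Arr R u := by
  rw [← CTAe_mul_pathEl p, ← mul_assoc]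
  exact CTANto_mul_pathEl (hy w) p

lemma CTAmul_mem_Nto {u : V} {x : Alg k V Arr R} (hx : x ∈ Nto k Arr R u)
    (y : Alg k V Arr R) (hy : ∀ u', y * e k V Arr R u' ∈ Nto k Arr R u') :
    y * x ∈ Nto k Arr R u := by
  induction hx using Submodule.span_induction with
  | mem x hx =>
    obtain ⟨w, p, rfl⟩ := hx
    exact CTAmk_mul_pathEl_mem p _ hy
  | zero => rw [mul_zero]; exact zero_mem _
  | add x y _ _ hx hy => rw [mul_add]; exact add_mem hx hy
  | smul a x _ hx => rw [mul_smul_comm]; exact Submodule.smul_mem _ _ hx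

lemma CTAmk_mul_e (g : Gen k V Arr) :
    ∀ u, RingQuot.mkAlgHom k (BoundRel k V Arr R) g * e k V Arr R u ∈ Nto k Arr R u := by
  induction g using FreeAlgebra.induction with
  | grade0 r =>
    intro u
    rw [AlgHom.commutes, Algebra.algebraMap_eq_smul_one, smul_mul_assoc, one_mul]
    exact Submodule.smul_mem _ _ (CTAe_mem_Nto u)
  | grade1 x =>
    intro u
    cases x with
    | inl v =>
      show e k V Arr R v * e k V Arr R u ∈ _
      rw [CTAe_mul_e]
      split
      · next hh => subst hh; exact CTAe_mem_Nto _
      · exact zero_mem _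
    | inr a =>
      show arrEl k V Arr R a * e k V Arr R u ∈ _
      by_cases hu : a.1.2 = u
      · subst hu
        rw [CTAarr_mul_e a, CTAarrEl_eq_pathEl a]
        exact CTApathEl_mem_Nto _
      · rw [CTAarr_mul_e_ne a hu]; exact zero_mem _
  | mul g₁ g₂ ih₁ ih₂ =>
    intro u
    rw [map_mul, mul_assoc]
    exact CTAmul_mem_Nto (ih₂ u) _ ih₁
  | add g₁ g₂ ih₁ ih₂ =>
    intro u
    rw [map_add, add_mul]
    exact add_mem (ih₁ u) (ih₂ u)

lemma CTAmul_e_mem (u : V) (x : Alg k V Arr R) :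
    x * e k V Arr R u ∈ Nto k Arr R u := by
  obtain ⟨g, rfl⟩ := RingQuot.mkAlgHom_surjective k (BoundRel k V Arr R) x
  exact CTAmk_mul_e g u

end Aux

section Aux2
open CTA

variable {k : Type} [Field k] {V : Type} [Fintype V] [DecidableEq V] {Arr : V → V → Prop}

lemma CTAcomp_zero {u v w : V} (h₁ : Arr u v) (h₂ : Arr v w) (h₃ : Arr w u) :
    arrEl k V Arr (satSet k V Arr) ⟨(u, v), h₁⟩ *
      arrEl k V Arr (satSet k V Arr) ⟨(v, w), h₂⟩ = 0 := by
  have hm : (genE k ⟨(u, v), h₁⟩ * genE k ⟨(v, w), h₂⟩ : Gen k V Arr) ∈ satSet k V Arr :=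
    ⟨u, v, w, h₁, h₂, h₃, rfl⟩
  have h := RingQuot.mkAlgHom_rel k (s := BoundRel k V Arr (satSet k V Arr))
    (BoundRel.rel hm)
  rw [map_mul, map_zero] at h
  exact h

lemma CTAexists_functional {A : Type} [AddCommGroup A] [Module k A] {S : Submodule k A}
    {v : A} (hv : v ∉ S) : ∃ f : A →ₗ[k] k, f v = 1 ∧ ∀ s ∈ S, f s = 0 := by
  have hqv : S.mkQ v ≠ 0 := by
    rw [Submodule.mkQ_apply]
    intro h0
    exact hv ((Submodule.Quotient.mk_eq_zero S).1 h0)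
  obtain ⟨g, hg⟩ := (LinearMap.toSpanSingleton k _ (S.mkQ v)).exists_leftInverse_of_injective
    (LinearMap.ker_toSpanSingleton k hqv)
  refine ⟨g ∘ₗ S.mkQ, ?_, ?_⟩
  · have h1 : g ((LinearMap.toSpanSingleton k _ (S.mkQ v)) 1) = 1 := by
      rw [← LinearMap.comp_apply, hg]; rfl
    rw [LinearMap.toSpanSingleton_apply, one_smul] at h1
    exact h1
  · intro s hs
    have : S.mkQ s = 0 := by
      rw [Submodule.mkQ_apply]
      exact (Submodule.Quotient.mk_eq_zero S).2 hs
    rw [LinearMap.comp_apply, this, map_zero]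

lemma CTAexists_functional_ne {A : Type} [AddCommGroup A] [Module k A]
    {v : A} (hv : v ≠ 0) : ∃ f : A →ₗ[k] k, f v = 1 := by
  obtain ⟨f, hf, -⟩ := CTAexists_functional (S := (⊥ : Submodule k A))
    (by simpa using hv)
  exact ⟨f, hf⟩

/-- Contraction of the first tensor factor along a functional. -/
noncomputable def contrL {k : Type} [Field k] {A : Type} [AddCommGroup A] [Module k A]
    (ε : A →ₗ[k] k) : A ⊗[k] A →ₗ[k] A :=
  TensorProduct.lift ((LinearMap.lsmul k A).comp ε)

@[simp] lemma contrL_tmul {A : Type} [AddCommGroup A] [Module k A]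
    (ε : A →ₗ[k] k) (x y : A) : contrL ε (x ⊗ₜ[k] y) = ε x • y := by
  simp [contrL]

/-- Contraction of the second tensor factor along a functional. -/
noncomputable def contrR {k : Type} [Field k] {A : Type} [AddCommGroup A] [Module k A]
    (ε : A →ₗ[k] k) : A ⊗[k] A →ₗ[k] A :=
  TensorProduct.lift ((LinearMap.lsmul k A).comp ε).flip

@[simp] lemma contrR_tmul {A : Type} [AddCommGroup A] [Module k A]
    (ε : A →ₗ[k] k) (x y : A) : contrR ε (x ⊗ₜ[k] y) = ε y • x := by
  simp [contrR]

lemma CTAkillLeft {A : Type} [Ring A] [Algebra k A] (e₀ γ₀ : A) (U' W : Submodule k A)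
    (hγe : γ₀ * e₀ = γ₀) (hγU' : ∀ u ∈ U', γ₀ * u = 0) (hγ0 : γ₀ ≠ 0)
    {z : A ⊗[k] A}
    (hz : z ∈ Submodule.map₂ (TensorProduct.mk k A A) (Submodule.span k {e₀} ⊔ U') W)
    (hcon : (γ₀ ⊗ₜ[k] (1 : A)) * z = 0) :
    z ∈ Submodule.map₂ (TensorProduct.mk k A A) U' W := by
  by_cases he : e₀ ∈ U'
  · have hU : Submodule.span k {e₀} ⊔ U' = U' :=
      sup_eq_right.2 ((Submodule.span_singleton_le_iff_mem _ _).2 he)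
    rwa [hU] at hz
  obtain ⟨ε, hε1, hε0⟩ := CTAexists_functional he
  have hdecomp : ∀ w, w ∈ Submodule.map₂ (TensorProduct.mk k A A)
        (Submodule.span k {e₀} ⊔ U') W →
      w - e₀ ⊗ₜ[k] (contrL ε w) ∈ Submodule.map₂ (TensorProduct.mk k A A) U' W := by
    intro w hw
    rw [Submodule.map₂_eq_span_image2] at hw
    induction hw using Submodule.span_induction with
    | mem x hx =>
      obtain ⟨u, hu, w', hw', rfl⟩ := hx
      obtain ⟨a, ha, b, hb, hab⟩ := Submodule.mem_sup.1 hu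
      obtain ⟨r, rfl⟩ := Submodule.mem_span_singleton.1 ha
      dsimp only [TensorProduct.mk_apply]
      rw [← hab]
      have hcv : contrL ε ((r • e₀ + b) ⊗ₜ[k] w') = r • w' := by
        rw [contrL_tmul, map_add, map_smul, hε1, hε0 b hb, add_zero, smul_eq_mul,
          mul_one]
      rw [hcv, TensorProduct.add_tmul, ← TensorProduct.smul_tmul, add_sub_cancel_left]
      exact Submodule.apply_mem_map₂ _ hb hw'
    | zero => simp only [map_zero, TensorProduct.tmul_zero, sub_zero]; exact zero_mem _
    | add x y hx hy ihx ihy =>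
      have hrw : (x + y) - e₀ ⊗ₜ[k] contrL ε (x + y) =
          (x - e₀ ⊗ₜ[k] contrL ε x) + (y - e₀ ⊗ₜ[k] contrL ε y) := by
        rw [map_add, TensorProduct.tmul_add]; abel
      rw [hrw]; exact add_mem ihx ihy
    | smul a x hx ihx =>
      have hrw : (a • x) - e₀ ⊗ₜ[k] contrL ε (a • x) =
          a • (x - e₀ ⊗ₜ[k] contrL ε x) := by
        rw [map_smul, TensorProduct.tmul_smul, smul_sub]
      rw [hrw]; exact Submodule.smul_mem _ _ ihx
  have ht := hdecomp z hz
  have hkill : ∀ w ∈ Submodule.map₂ (TensorProduct.mk k A A) U' W,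
      (γ₀ ⊗ₜ[k] (1 : A)) * w = 0 := by
    intro w hw
    rw [Submodule.map₂_eq_span_image2] at hw
    induction hw using Submodule.span_induction with
    | mem x hx =>
      obtain ⟨u, hu, w', hw', rfl⟩ := hx
      dsimp only [TensorProduct.mk_apply]
      rw [Algebra.TensorProduct.tmul_mul_tmul, hγU' u hu,
        TensorProduct.zero_tmul]
    | zero => rw [mul_zero]
    | add x y hx hy ihx ihy => rw [mul_add, ihx, ihy, add_zero]
    | smul a x hx ihx => rw [mul_smul_comm, ihx, smul_zero]
  have hγt := hkill _ ht
  have hγy : γ₀ ⊗ₜ[k] (contrL ε z) = 0 := by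
    have hexp : (γ₀ ⊗ₜ[k] (1 : A)) * (e₀ ⊗ₜ[k] contrL ε z) = γ₀ ⊗ₜ[k] contrL ε z := by
      rw [Algebra.TensorProduct.tmul_mul_tmul, hγe, one_mul]
    have h2 : e₀ ⊗ₜ[k] contrL ε z = z - (z - e₀ ⊗ₜ[k] contrL ε z) := by abel
    rw [← hexp, h2, mul_sub, hcon, hγt, sub_zero]
  obtain ⟨ε₂, hε₂⟩ := CTAexists_functional_ne (k := k) hγ0
  have hy0 : contrL ε z = 0 := by
    have hh := congrArg (contrL (k := k) ε₂) hγy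
    rwa [contrL_tmul, hε₂, one_smul, map_zero] at hh
  rw [hy0, TensorProduct.tmul_zero, sub_zero] at ht
  exact ht

lemma CTAkillRight {A : Type} [Ring A] [Algebra k A] (e₀ β₀ : A) (U' W' : Submodule k A)
    (heβ : e₀ * β₀ = β₀) (hW'β : ∀ w ∈ W', w * β₀ = 0) (hβ0 : β₀ ≠ 0)
    {z : A ⊗[k] A}
    (hz : z ∈ Submodule.map₂ (TensorProduct.mk k A A) U' (Submodule.span k {e₀} ⊔ W'))
    (hcon : z * ((1 : A) ⊗ₜ[k] β₀) = 0) :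
    z ∈ Submodule.map₂ (TensorProduct.mk k A A) U' W' := by
  by_cases he : e₀ ∈ W'
  · have hU : Submodule.span k {e₀} ⊔ W' = W' :=
      sup_eq_right.2 ((Submodule.span_singleton_le_iff_mem _ _).2 he)
    rwa [hU] at hz
  obtain ⟨ε, hε1, hε0⟩ := CTAexists_functional he
  have hdecomp : ∀ w, w ∈ Submodule.map₂ (TensorProduct.mk k A A) U'
        (Submodule.span k {e₀} ⊔ W') →
      w - (contrR ε w) ⊗ₜ[k] e₀ ∈ Submodule.map₂ (TensorProduct.mk k A A) U' W' := by
    intro w hw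
    rw [Submodule.map₂_eq_span_image2] at hw
    induction hw using Submodule.span_induction with
    | mem x hx =>
      obtain ⟨u, hu, w', hw', rfl⟩ := hx
      obtain ⟨a, ha, b, hb, hab⟩ := Submodule.mem_sup.1 hw'
      obtain ⟨r, rfl⟩ := Submodule.mem_span_singleton.1 ha
      dsimp only [TensorProduct.mk_apply]
      rw [← hab]
      have hcv : contrR ε (u ⊗ₜ[k] (r • e₀ + b)) = r • u := by
        rw [contrR_tmul, map_add, map_smul, hε1, hε0 b hb, add_zero, smul_eq_mul,
          mul_one]
      rw [hcv, TensorProduct.tmul_add, TensorProduct.tmul_smul,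
        ← TensorProduct.smul_tmul', TensorProduct.smul_tmul', add_sub_cancel_left]
      exact Submodule.apply_mem_map₂ _ hu hb
    | zero => simp only [map_zero, TensorProduct.zero_tmul, sub_zero]; exact zero_mem _
    | add x y hx hy ihx ihy =>
      have hrw : (x + y) - (contrR ε (x + y)) ⊗ₜ[k] e₀ =
          (x - (contrR ε x) ⊗ₜ[k] e₀) + (y - (contrR ε y) ⊗ₜ[k] e₀) := by
        rw [map_add, TensorProduct.add_tmul]; abel
      rw [hrw]; exact add_mem ihx ihy
    | smul a x hx ihx =>
      have hrw : (a • x) - (contrR ε (a • x)) ⊗ₜ[k] e₀ =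
          a • (x - (contrR ε x) ⊗ₜ[k] e₀) := by
        rw [map_smul, ← TensorProduct.smul_tmul', smul_sub]
      rw [hrw]; exact Submodule.smul_mem _ _ ihx
  have ht := hdecomp z hz
  have hkill : ∀ w ∈ Submodule.map₂ (TensorProduct.mk k A A) U' W',
      w * ((1 : A) ⊗ₜ[k] β₀) = 0 := by
    intro w hw
    rw [Submodule.map₂_eq_span_image2] at hw
    induction hw using Submodule.span_induction with
    | mem x hx =>
      obtain ⟨u, hu, w', hw', rfl⟩ := hx
      dsimp only [TensorProduct.mk_apply]
      rw [Algebra.TensorProduct.tmul_mul_tmul, hW'β w' hw',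
        TensorProduct.tmul_zero]
    | zero => rw [zero_mul]
    | add x y hx hy ihx ihy => rw [add_mul, ihx, ihy, add_zero]
    | smul a x hx ihx => rw [smul_mul_assoc, ihx, smul_zero]
  have hγt := hkill _ ht
  have hγy : (contrR ε z) ⊗ₜ[k] β₀ = 0 := by
    have hexp : ((contrR ε z) ⊗ₜ[k] e₀) * ((1 : A) ⊗ₜ[k] β₀) =
        (contrR ε z) ⊗ₜ[k] β₀ := by
      rw [Algebra.TensorProduct.tmul_mul_tmul, heβ, mul_one]
    have h2 : (contrR ε z) ⊗ₜ[k] e₀ = z - (z - (contrR ε z) ⊗ₜ[k] e₀) := by abel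
    rw [← hexp, h2, sub_mul, hcon, hγt, sub_zero]
  obtain ⟨ε₂, hε₂⟩ := CTAexists_functional_ne (k := k) hβ0
  have hy0 : contrR ε z = 0 := by
    have hh := congrArg (contrR (k := k) ε₂) hγy
    rwa [contrR_tmul, hε₂, one_smul, map_zero] at hh
  rw [hy0, TensorProduct.zero_tmul, sub_zero] at ht
  exact ht

end Aux2

section Aux3
open CTA

variable {k : Type} [Field k] {V : Type} [Fintype V] [DecidableEq V] {Arr : V → V → Prop}

set_option maxHeartbeats 1000000 in
lemma CTAarrEl_ne_zero {i i1 d1 : V} (h12 : i1 ≠ i) (h23 : i1 ≠ d1) (h13 : d1 ≠ i)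
    (hγ : Arr i1 d1) (hβ : Arr d1 i) :
    arrEl k V Arr (satSet k V Arr) ⟨(i1, d1), hγ⟩ ≠ 0 ∧
      arrEl k V Arr (satSet k V Arr) ⟨(d1, i), hβ⟩ ≠ 0 := by
  classical
  set E : Fin 2 → Fin 2 → Matrix (Fin 2) (Fin 2) k := fun a b => Matrix.single a b 1
    with hEdef
  have hE : ∀ a b c d : Fin 2, E a b * E c d = if b = c then E a d else 0 := by
    intro a b c d
    by_cases h : b = c
    · subst h; rw [if_pos rfl, hEdef]
      simpa using Matrix.single_mul_single_same (c := (1 : k)) a b d 1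
    · rw [if_neg h, hEdef]
      exact Matrix.single_mul_single_of_ne (c := (1 : k)) a b c h 1
  have hone : E 0 0 + E 1 1 = (1 : Matrix (Fin 2) (Fin 2) k) := by
    ext a b
    fin_cases a <;> fin_cases b <;>
      simp [hEdef, Matrix.single, Matrix.one_apply]
  set φV : V → Matrix (Fin 2) (Fin 2) k × Matrix (Fin 2) (Fin 2) k := fun v =>
    if v = i1 then (E 0 0, 0) else if v = d1 then (E 1 1, E 0 0)
      else if v = i then (0, E 1 1) else 0 with hφV
  set φE : Edge V Arr → Matrix (Fin 2) (Fin 2) k × Matrix (Fin 2) (Fin 2) k := fun a =>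
    if a.1 = (i1, d1) then (E 0 1, 0) else if a.1 = (d1, i) then (0, E 0 1) else 0
    with hφE
  set F : Gen k V Arr →ₐ[k] Matrix (Fin 2) (Fin 2) k × Matrix (Fin 2) (Fin 2) k :=
    FreeAlgebra.lift k (Sum.elim φV φE) with hF
  have hFV : ∀ v, F (genV k v) = φV v := fun v => by
    rw [hF, genV, FreeAlgebra.lift_ι_apply]; rfl
  have hFE : ∀ a, F (genE k a) = φE a := fun a => by
    rw [hF, genE, FreeAlgebra.lift_ι_apply]; rfl
  have hrel : ∀ ⦃x y : Gen k V Arr⦄, BoundRel k V Arr (satSet k V Arr) x y →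
      F x = F y := by
    intro x y hxy
    cases hxy with
    | quiver hq =>
      cases hq with
      | idem u v =>
        rw [map_mul, hFV, hFV, apply_ite F, map_zero, hFV]
        simp only [hφV]
        by_cases huv : u = v
        · subst huv
          rw [if_pos rfl]
          split_ifs <;> simp [Prod.mk_mul_mk, hE]
        · rw [if_neg huv]
          split_ifs <;> simp_all [Prod.mk_mul_mk, hE]
      | unit =>
        rw [map_sum, map_one]
        have hsplit : ∀ v : V, F (genV k v) =
            (if v = i1 then ((E 0 0, 0) :
                Matrix (Fin 2) (Fin 2) k × Matrix (Fin 2) (Fin 2) k) else 0) +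
            (if v = d1 then ((E 1 1, E 0 0) :
                Matrix (Fin 2) (Fin 2) k × Matrix (Fin 2) (Fin 2) k) else 0) +
            (if v = i then ((0, E 1 1) :
                Matrix (Fin 2) (Fin 2) k × Matrix (Fin 2) (Fin 2) k) else 0) := by
          intro v
          rw [hFV, hφV]
          split_ifs <;> simp_all
        rw [Finset.sum_congr rfl fun v _ => hsplit v]
        rw [Finset.sum_add_distrib, Finset.sum_add_distrib,
          Finset.sum_ite_eq' Finset.univ i1, Finset.sum_ite_eq' Finset.univ d1,
          Finset.sum_ite_eq' Finset.univ i]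
        simp only [Finset.mem_univ, if_pos]
        rw [Prod.mk_add_mk, Prod.mk_add_mk]
        simp only [add_zero, zero_add, hone]
        rfl
      | src a =>
        rw [map_mul, hFV, hFE]
        simp only [hφE]
        split_ifs with ha hb
        · have h1 : a.1.1 = i1 := by rw [ha]
          rw [h1]
          simp [hφV, hE, Prod.mk_mul_mk, Ne.symm h23, Ne.symm h12, Ne.symm h13]
        · have h1 : a.1.1 = d1 := by rw [hb]
          rw [h1]
          simp [hφV, hE, Prod.mk_mul_mk, Ne.symm h23, Ne.symm h12, Ne.symm h13]
        · rw [mul_zero]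
      | tgt a =>
        rw [map_mul, hFE, hFV]
        simp only [hφE]
        split_ifs with ha hb
        · have h1 : a.1.2 = d1 := by rw [ha]
          rw [h1]
          simp [hφV, hE, Prod.mk_mul_mk, Ne.symm h23, Ne.symm h12, Ne.symm h13]
        · have h1 : a.1.2 = i := by rw [hb]
          rw [h1]
          simp [hφV, hE, Prod.mk_mul_mk, Ne.symm h23, Ne.symm h12, Ne.symm h13]
        · rw [zero_mul]
    | rel hx =>
      obtain ⟨u, v, w, h₁, h₂, h₃, rfl⟩ := hx
      rw [map_mul, hFE, hFE, map_zero]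
      simp only [hφE]
      split_ifs <;> simp [Prod.mk_mul_mk, hE]
  set φ := RingQuot.liftAlgHom k (s := BoundRel k V Arr (satSet k V Arr)) ⟨F, hrel⟩
    with hφ
  have happ : ∀ g : Gen k V Arr,
      φ (RingQuot.mkAlgHom k (BoundRel k V Arr (satSet k V Arr)) g) = F g := fun g => by
    rw [hφ, RingQuot.liftAlgHom_mkAlgHom_apply]
  constructor
  · intro h0
    have h1 : φ (arrEl k V Arr (satSet k V Arr) ⟨(i1, d1), hγ⟩) = 0 := by
      rw [h0, map_zero]
    rw [arrEl, happ, hFE] at h1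
    have h1' : ((E 0 1, 0) : Matrix (Fin 2) (Fin 2) k × Matrix (Fin 2) (Fin 2) k) = 0 := by
      rw [← h1]; simp [hφE]
    have h2 := congrArg (fun m : Matrix (Fin 2) (Fin 2) k × Matrix (Fin 2) (Fin 2) k =>
      m.1 0 1) h1'
    simp [hEdef, Matrix.single] at h2
  · intro h0
    have h1 : φ (arrEl k V Arr (satSet k V Arr) ⟨(d1, i), hβ⟩) = 0 := by
      rw [h0, map_zero]
    have hne : ((d1, i) : V × V) ≠ (i1, d1) := fun hh =>
      h23 (congrArg Prod.fst hh).symm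
    rw [arrEl, happ, hFE] at h1
    have h1' : ((0, E 0 1) : Matrix (Fin 2) (Fin 2) k × Matrix (Fin 2) (Fin 2) k) = 0 := by
      rw [← h1]; simp [hφE, hne]
    have h2 := congrArg (fun m : Matrix (Fin 2) (Fin 2) k × Matrix (Fin 2) (Fin 2) k =>
      m.2 0 1) h1'
    simp [hEdef, Matrix.single] at h2

lemma CTAnbhd (hQ : IsTypeAShape Arr) {i i1 d1 : V} (hα : Arr i i1) (hγ : Arr i1 d1)
    (hβ : Arr d1 i) (hval : valency V Arr d1 = 2) :
    (∀ v, Arr d1 v → v = i) ∧ (∀ w, Arr w d1 → w = i1) := by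
  have hii1 : i ≠ i1 := by rintro rfl; exact hQ.irrefl i hα
  have hd1i : d1 ≠ i := by rintro rfl; exact hQ.irrefl d1 hβ
  have hd1i1 : d1 ≠ i1 := by rintro rfl; exact hQ.irrefl d1 hγ
  have hNS : (graph V Arr).neighborSet d1 = {i, i1} := by
    have hmem1 : i ∈ (graph V Arr).neighborSet d1 :=
      (SimpleGraph.mem_neighborSet _ _ _).2
        ((SimpleGraph.fromRel_adj Arr d1 i).2 ⟨hd1i, Or.inl hβ⟩)
    have hmem2 : i1 ∈ (graph V Arr).neighborSet d1 :=
      (SimpleGraph.mem_neighborSet _ _ _).2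
        ((SimpleGraph.fromRel_adj Arr d1 i1).2 ⟨hd1i1, Or.inr hγ⟩)
    have hsub : {i, i1} ⊆ (graph V Arr).neighborSet d1 := by
      intro x hx
      rcases Set.mem_insert_iff.1 hx with h | h
      · rw [h]; exact hmem1
      · rw [Set.mem_singleton_iff.1 h]; exact hmem2
    refine (Set.eq_of_subset_of_ncard_le hsub ?_ (Set.toFinite _)).symm
    rw [Set.ncard_pair hii1]
    exact le_of_eq hval
  constructor
  · intro v hv
    have hd1v : d1 ≠ v := by rintro rfl; exact hQ.irrefl d1 hv
    have hmem : v ∈ (graph V Arr).neighborSet d1 :=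
      (SimpleGraph.mem_neighborSet _ _ _).2
        ((SimpleGraph.fromRel_adj Arr d1 v).2 ⟨hd1v, Or.inl hv⟩)
    rw [hNS] at hmem
    rcases Set.mem_insert_iff.1 hmem with h | h
    · exact h
    · exfalso
      have h' := Set.mem_singleton_iff.1 h
      subst h'
      exact hQ.no_two_cycle v d1 hγ hv
  · intro w hw
    have hd1w : d1 ≠ w := by rintro rfl; exact hQ.irrefl d1 hw
    have hmem : w ∈ (graph V Arr).neighborSet d1 :=
      (SimpleGraph.mem_neighborSet _ _ _).2
        ((SimpleGraph.fromRel_adj Arr d1 w).2 ⟨hd1w, Or.inr hw⟩)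
    rw [hNS] at hmem
    rcases Set.mem_insert_iff.1 hmem with h | h
    · exfalso
      have h' := h
      subst h'
      exact hQ.no_two_cycle d1 w hβ hw
    · exact Set.mem_singleton_iff.1 h

end Aux3

section Aux4
open CTA

variable {k : Type} [Field k] {V : Type} [Fintype V] [DecidableEq V] {Arr : V → V → Prop}
variable {R : Set (Gen k V Arr)}

lemma CTAMle {i d1 : V} (hβ : Arr d1 i) (hout : ∀ v, Arr d1 v → v = i) :
    Mfrom k Arr R d1 ≤ Submodule.span k {e k V Arr R d1} ⊔
      Submodule.map (LinearMap.mulLeft k (arrEl k V Arr R ⟨(d1, i), hβ⟩))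
        (Mfrom k Arr R i) := by
  rw [Mfrom, Submodule.span_le]
  rintro x ⟨v, p, rfl⟩
  cases p with
  | nil =>
    exact Submodule.mem_sup_left (Submodule.mem_span_singleton_self _)
  | @cons _ v' _ h p' =>
    have hv := hout _ h
    subst v'
    have hrw : pathEl k V Arr R (Pth.cons h p') =
        arrEl k V Arr R ⟨(d1, i), hβ⟩ * pathEl k V Arr R p' := CTApathEl_cons h p'
    refine Submodule.mem_sup_right (Submodule.mem_map.2
      ⟨pathEl k V Arr R p', CTApathEl_mem_Mfrom p', ?_⟩)
    rw [LinearMap.mulLeft_apply, ← hrw]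

lemma CTANle {i1 d1 : V} (hγ : Arr i1 d1) (hin : ∀ w, Arr w d1 → w = i1) :
    Nto k Arr R d1 ≤ Submodule.span k {e k V Arr R d1} ⊔
      Submodule.map (LinearMap.mulRight k (arrEl k V Arr R ⟨(i1, d1), hγ⟩))
        (Nto k Arr R i1) := by
  rw [Nto, Submodule.span_le]
  rintro x ⟨w, p, rfl⟩
  suffices H : ∀ (w v : V) (p : Pth Arr w v), d1 = v →
      pathEl k V Arr R p ∈ Submodule.span k {e k V Arr R d1} ⊔
        Submodule.map (LinearMap.mulRight k (arrEl k V Arr R ⟨(i1, d1), hγ⟩))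
          (Nto k Arr R i1) from H w d1 p rfl
  intro w v p
  induction p with
  | nil v' =>
    rintro rfl
    exact Submodule.mem_sup_left (Submodule.mem_span_singleton_self _)
  | @cons _ v₁ _ h p' ih =>
    intro hv
    have hp' := ih hv
    subst hv
    rw [CTApathEl_cons]
    rcases Submodule.mem_sup.1 hp' with ⟨a, ha, b, hb, hab⟩
    rcases Submodule.mem_span_singleton.1 ha with ⟨r, rfl⟩
    rcases Submodule.mem_map.1 hb with ⟨n, hn, rfl⟩
    rw [← hab, mul_add, mul_smul_comm]
    refine add_mem (Submodule.smul_mem _ _ ?_) ?_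
    · by_cases hv1 : d1 = v₁
      · subst hv1
        rw [CTAarr_mul_e ⟨(_, d1), h⟩]
        have hw := (hin _ h).symm
        subst hw
        refine Submodule.mem_sup_right (Submodule.mem_map.2
          ⟨e k V Arr R i1, CTAe_mem_Nto i1, ?_⟩)
        rw [LinearMap.mulRight_apply]
        exact CTAe_mul_arr ⟨(i1, d1), hγ⟩
      · rw [CTAarr_mul_e_ne ⟨(_, v₁), h⟩ (Ne.symm hv1)]
        exact zero_mem _
    · rw [LinearMap.mulRight_apply, ← mul_assoc]
      refine Submodule.mem_sup_right (Submodule.mem_map.2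
        ⟨arrEl k V Arr R ⟨(_, v₁), h⟩ * n, CTAarr_mul_Nto h hn, ?_⟩)
      rw [LinearMap.mulRight_apply]

lemma CTAspan2 {i d1 i1 : V} (hβ : Arr d1 i) (hγ : Arr i1 d1) {m n : Alg k V Arr R}
    (hm : m ∈ Mfrom k Arr R i) (hn : n ∈ Nto k Arr R i1) :
    (arrEl k V Arr R ⟨(d1, i), hβ⟩ * m) ⊗ₜ[k] (n * arrEl k V Arr R ⟨(i1, d1), hγ⟩) ∈
      Submodule.span k {z : Alg k V Arr R ⊗[k] Alg k V Arr R |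
        ∃ (u w : V) (ρ : Pth Arr i u) (μ : Pth Arr w i1),
          z = (arrEl k V Arr R ⟨(d1, i), hβ⟩ * pathEl k V Arr R ρ) ⊗ₜ[k]
            (pathEl k V Arr R μ * arrEl k V Arr R ⟨(i1, d1), hγ⟩)} := by
  rw [Mfrom] at hm
  induction hm using Submodule.span_induction with
  | mem m hm' =>
    obtain ⟨u, ρ, rfl⟩ := hm'
    rw [Nto] at hn
    induction hn using Submodule.span_induction with
    | mem n hn' =>
      obtain ⟨w', μ, rfl⟩ := hn'
      exact Submodule.subset_span ⟨u, w', ρ, μ, rfl⟩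
    | zero => rw [zero_mul, TensorProduct.tmul_zero]; exact zero_mem _
    | add n₁ n₂ _ _ ih₁ ih₂ =>
      rw [add_mul, TensorProduct.tmul_add]; exact add_mem ih₁ ih₂
    | smul a n _ ih =>
      rw [smul_mul_assoc, TensorProduct.tmul_smul]; exact Submodule.smul_mem _ _ ih
  | zero => rw [mul_zero, TensorProduct.zero_tmul]; exact zero_mem _
  | add m₁ m₂ _ _ ih₁ ih₂ =>
    rw [mul_add, TensorProduct.add_tmul]; exact add_mem ih₁ ih₂
  | smul a m _ ih =>
    rw [mul_smul_comm, ← TensorProduct.smul_tmul']; exact Submodule.smul_mem _ _ ih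

end Aux4

section Aux5
open CTA

variable {k : Type} [Field k] {V : Type} [Fintype V] [DecidableEq V] {Arr : V → V → Prop}

lemma CTAbetaM (hQs : IsTypeAShape Arr) {i i1 d1 im1 : V} (hα : Arr i i1)
    (hγ : Arr i1 d1) (hβ : Arr d1 i) (him1 : Arr im1 i)
    (hNi : (graph V Arr).neighborSet i = {im1, i1, d1})
    {m : Alg k V Arr (satSet k V Arr)} (hm : m ∈ Mfrom k Arr (satSet k V Arr) i) :
    arrEl k V Arr (satSet k V Arr) ⟨(d1, i), hβ⟩ * m ∈
      Submodule.span k {arrEl k V Arr (satSet k V Arr) ⟨(d1, i), hβ⟩} := by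
  rw [Mfrom] at hm
  induction hm using Submodule.span_induction with
  | mem m hm' =>
    obtain ⟨u, ρ, rfl⟩ := hm'
    cases ρ with
    | nil =>
      rw [CTApathEl_nil, CTAarr_mul_e ⟨(d1, i), hβ⟩]
      exact Submodule.mem_span_singleton_self _
    | @cons _ v' _ h p' =>
      have hiv : i ≠ v' := by rintro rfl; exact hQs.irrefl i h
      have hmem : v' ∈ (graph V Arr).neighborSet i :=
        (SimpleGraph.mem_neighborSet _ _ _).2
          ((SimpleGraph.fromRel_adj Arr i v').2 ⟨hiv, Or.inl h⟩)
      rw [hNi] at hmem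
      have hv' : i1 = v' := by
        rcases Set.mem_insert_iff.1 hmem with h1 | h1
        · exfalso; rw [h1] at h; exact hQs.no_two_cycle im1 i him1 h
        · rcases Set.mem_insert_iff.1 h1 with h2 | h2
          · exact h2.symm
          · exfalso; rw [Set.mem_singleton_iff.1 h2] at h
            exact hQs.no_two_cycle d1 i hβ h
      subst hv'
      rw [CTApathEl_cons, ← mul_assoc, CTAcomp_zero hβ h hγ, zero_mul]
      exact zero_mem _
  | zero => rw [mul_zero]; exact zero_mem _
  | add m₁ m₂ _ _ ih₁ ih₂ => rw [mul_add]; exact add_mem ih₁ ih₂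
  | smul a m _ ih => rw [mul_smul_comm]; exact Submodule.smul_mem _ _ ih

lemma CTANgamma (hQs : IsTypeAShape Arr) {i i1 d1 ip2 : V} (hα : Arr i i1)
    (hγ : Arr i1 d1) (hβ : Arr d1 i) (hip2 : Arr i1 ip2)
    (hNi1 : (graph V Arr).neighborSet i1 = {i, ip2, d1})
    {n : Alg k V Arr (satSet k V Arr)} (hn : n ∈ Nto k Arr (satSet k V Arr) i1) :
    n * arrEl k V Arr (satSet k V Arr) ⟨(i1, d1), hγ⟩ ∈
      Submodule.span k {arrEl k V Arr (satSet k V Arr) ⟨(i1, d1), hγ⟩} := by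
  rw [Nto] at hn
  induction hn using Submodule.span_induction with
  | mem n hn' =>
    obtain ⟨w, μ, rfl⟩ := hn'
    suffices H : ∀ (w v : V) (μ : Pth Arr w v), i1 = v →
        pathEl k V Arr (satSet k V Arr) μ * arrEl k V Arr (satSet k V Arr) ⟨(i1, d1), hγ⟩ ∈
          Submodule.span k {arrEl k V Arr (satSet k V Arr) ⟨(i1, d1), hγ⟩} from
      H w i1 μ rfl
    intro w' v' μ'
    induction μ' with
    | nil v'' =>
      rintro rfl
      rw [CTApathEl_nil, CTAe_mul_arr ⟨(i1, d1), hγ⟩]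
      exact Submodule.mem_span_singleton_self _
    | @cons w₀ v₁ _ h p' ih =>
      intro hv
      have hp := ih hv
      subst hv
      obtain ⟨r, hr⟩ := Submodule.mem_span_singleton.1 hp
      rw [CTApathEl_cons, mul_assoc, ← hr, mul_smul_comm]
      refine Submodule.smul_mem _ _ ?_
      by_cases hv1 : i1 = v₁
      · subst hv1
        have hne : i1 ≠ w₀ := by rintro rfl; exact hQs.irrefl i1 h
        have hmem : w₀ ∈ (graph V Arr).neighborSet i1 :=
          (SimpleGraph.mem_neighborSet _ _ _).2
            ((SimpleGraph.fromRel_adj Arr i1 w₀).2 ⟨hne, Or.inr h⟩)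
        rw [hNi1] at hmem
        rcases Set.mem_insert_iff.1 hmem with h1 | h1
        · have h1' : i = w₀ := h1.symm
          subst h1'
          rw [CTAcomp_zero h hγ hβ]
          exact zero_mem _
        · rcases Set.mem_insert_iff.1 h1 with h2 | h2
          · exfalso; rw [h2] at h; exact hQs.no_two_cycle i1 ip2 hip2 h
          · exfalso; rw [Set.mem_singleton_iff.1 h2] at h
            exact hQs.no_two_cycle i1 d1 hγ h
      · rw [← CTAe_mul_arr ⟨(i1, d1), hγ⟩, ← mul_assoc,
          CTAarr_mul_e_ne ⟨(w₀, v₁), h⟩ (Ne.symm hv1), zero_mul]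
        exact zero_mem _
  | zero => rw [zero_mul]; exact zero_mem _
  | add n₁ n₂ _ _ ih₁ ih₂ => rw [add_mul]; exact add_mem ih₁ ih₂
  | smul a n _ ih => rw [smul_mul_assoc]; exact Submodule.smul_mem _ _ ih

end Aux5
open CTA in
/-- In a cluster-tilted algebra of type `𝔸` whose quiver contains a saturated oriented
3-cycle `i → i+1 → d₁ → i` with `d₁` of valency two, every open Frobenius structure `Δ`
with `Δ(β) = Δ(γ) = 0` satisfies `Δ(e_{d₁}) = ∑ A_{ρμ} (βρ) ⊗ (μγ)`, the sum ranging over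
paths `ρ` with source `i` and paths `μ` with target `i+1`.  If moreover the only other
arrows at `i` and `i+1` are `i−1 → i` and `i+1 → i+2`, then `Δ(e_{d₁}) = A • (β ⊗ γ)`. -/
theorem frob_at_valency_two_cycle_vertex (k : Type) [Field k] (V : Type) [Fintype V]
    [DecidableEq V] (Arr : V → V → Prop) (hQ : IsTypeA Arr)
    (i i1 d1 : V) (hα : Arr i i1) (hγ : Arr i1 d1) (hβ : Arr d1 i)
    (hval : valency V Arr d1 = 2) :
    ∀ Δ : ctAlg k V Arr →ₗ[k] ctAlg k V Arr ⊗[k] ctAlg k V Arr,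
      Δ ∈ FrobSpace k (ctAlg k V Arr) →
      Δ (arrEl k V Arr (satSet k V Arr) ⟨(d1, i), hβ⟩) = 0 →
      Δ (arrEl k V Arr (satSet k V Arr) ⟨(i1, d1), hγ⟩) = 0 →
      (Δ (e k V Arr (satSet k V Arr) d1) ∈ Submodule.span k
        {z : ctAlg k V Arr ⊗[k] ctAlg k V Arr |
          ∃ (u w : V) (ρ : Pth Arr i u) (μ : Pth Arr w i1),
            z = (arrEl k V Arr (satSet k V Arr) ⟨(d1, i), hβ⟩ *
                  pathEl k V Arr (satSet k V Arr) ρ) ⊗ₜ[k]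
                (pathEl k V Arr (satSet k V Arr) μ *
                  arrEl k V Arr (satSet k V Arr) ⟨(i1, d1), hγ⟩)}) ∧
      (∀ im1 ip2 : V, Arr im1 i → Arr i1 ip2 →
        (graph V Arr).neighborSet i = {im1, i1, d1} →
        (graph V Arr).neighborSet i1 = {i, ip2, d1} →
        ∃ A : k, Δ (e k V Arr (satSet k V Arr) d1) =
          A • (arrEl k V Arr (satSet k V Arr) ⟨(d1, i), hβ⟩ ⊗ₜ[k]
               arrEl k V Arr (satSet k V Arr) ⟨(i1, d1), hγ⟩)) := by
  intro Δ hΔ hΔβ hΔγ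
  classical
  have hQs := hQ.1
  have hfr : IsOpenFrobenius k (ctAlg k V Arr) Δ := hΔ
  have h12 : i1 ≠ i := by rintro rfl; exact hQs.irrefl i1 hα
  have h23 : i1 ≠ d1 := by rintro rfl; exact hQs.irrefl i1 hγ
  have h13 : d1 ≠ i := by rintro rfl; exact hQs.irrefl d1 hβ
  obtain ⟨hout, hin⟩ := CTAnbhd hQs hα hγ hβ hval
  obtain ⟨hγne, hβne⟩ := CTAarrEl_ne_zero (k := k) h12 h23 h13 hγ hβ
  set A := ctAlg k V Arr with hA
  set Rs := satSet k V Arr with hRs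
  set eD := e k V Arr Rs d1 with heDdef
  set βv := arrEl k V Arr Rs ⟨(d1, i), hβ⟩ with hβvdef
  set γv := arrEl k V Arr Rs ⟨(i1, d1), hγ⟩ with hγvdef
  have heDmul : eD * eD = eD := by rw [heDdef, CTAe_mul_e, if_pos rfl]
  have hid1 : Δ eD = (eD ⊗ₜ[k] (1 : A)) * Δ eD := by
    have h := (hfr eD eD).1; rwa [heDmul] at h
  have hid2 : Δ eD = Δ eD * ((1 : A) ⊗ₜ[k] eD) := by
    have h := (hfr eD eD).2; rwa [heDmul] at h
  have hγeD : γv * eD = γv := CTAarr_mul_e ⟨(i1, d1), hγ⟩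
  have heDβ : eD * βv = βv := CTAe_mul_arr ⟨(d1, i), hβ⟩
  have hcon1 : (γv ⊗ₜ[k] (1 : A)) * Δ eD = 0 := by
    have h := (hfr γv eD).1
    rw [hγeD] at h
    rw [← h, hΔγ]
  have hcon2 : Δ eD * ((1 : A) ⊗ₜ[k] βv) = 0 := by
    have h := (hfr eD βv).2
    rw [heDβ] at h
    rw [← h, hΔβ]
  set M := Mfrom k Arr Rs i with hMdef
  set N := Nto k Arr Rs i1 with hNdef
  set U' := Submodule.map (LinearMap.mulLeft k βv) M with hU'def
  set W' := Submodule.map (LinearMap.mulRight k γv) N with hW'def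
  have hstepA : Δ eD ∈ Submodule.map₂ (TensorProduct.mk k A A)
      (Submodule.span k {eD} ⊔ U') (Submodule.span k {eD} ⊔ W') := by
    have hMle := CTAMle (R := Rs) hβ hout
    have hNle := CTANle (R := Rs) hγ hin
    have hform : ∀ z : A ⊗[k] A,
        (eD ⊗ₜ[k] (1 : A)) * (z * ((1 : A) ⊗ₜ[k] eD)) ∈
          Submodule.map₂ (TensorProduct.mk k A A)
            (Submodule.span k {eD} ⊔ U') (Submodule.span k {eD} ⊔ W') := by
      intro z
      induction z using TensorProduct.induction_on with
      | zero => rw [zero_mul, mul_zero]; exact zero_mem _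
      | tmul x y =>
        rw [Algebra.TensorProduct.tmul_mul_tmul, Algebra.TensorProduct.tmul_mul_tmul,
          one_mul, mul_one]
        exact Submodule.apply_mem_map₂ _ (hMle (CTAe_mul_mem d1 x))
          (hNle (CTAmul_e_mem d1 y))
      | add x y ihx ihy =>
        rw [add_mul, mul_add]
        exact add_mem ihx ihy
    have hexpr : Δ eD = (eD ⊗ₜ[k] (1 : A)) * (Δ eD * ((1 : A) ⊗ₜ[k] eD)) := by
      rw [← hid2]; exact hid1
    rw [hexpr]
    exact hform _
  have hγU' : ∀ u ∈ U', γv * u = 0 := by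
    intro u hu
    obtain ⟨m, hm, rfl⟩ := Submodule.mem_map.1 hu
    rw [LinearMap.mulLeft_apply, ← mul_assoc, hγvdef, hβvdef,
      CTAcomp_zero hγ hβ hα, zero_mul]
  have hW'β : ∀ w ∈ W', w * βv = 0 := by
    intro w hw
    obtain ⟨n, hn, rfl⟩ := Submodule.mem_map.1 hw
    rw [LinearMap.mulRight_apply, mul_assoc, hγvdef, hβvdef,
      CTAcomp_zero hγ hβ hα, mul_zero]
  have hkl := CTAkillLeft eD γv U' (Submodule.span k {eD} ⊔ W') hγeD hγU' hγne
    hstepA hcon1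
  have hkr := CTAkillRight eD βv U' W' heDβ hW'β hβne hkl hcon2
  constructor
  · refine Submodule.map₂_le.2 ?_ hkr
    intro b hb w hw
    obtain ⟨m, hm, rfl⟩ := Submodule.mem_map.1 hb
    obtain ⟨n, hn, rfl⟩ := Submodule.mem_map.1 hw
    simp only [TensorProduct.mk_apply, LinearMap.mulLeft_apply,
      LinearMap.mulRight_apply]
    exact CTAspan2 (R := Rs) hβ hγ hm hn
  · intro im1 ip2 him1 hip2 hNi hNi1
    have hfin : Submodule.map₂ (TensorProduct.mk k A A) U' W' ≤
        Submodule.span k {βv ⊗ₜ[k] γv} := by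
      refine Submodule.map₂_le.2 ?_
      intro b hb w hw
      obtain ⟨m, hm, rfl⟩ := Submodule.mem_map.1 hb
      obtain ⟨n, hn, rfl⟩ := Submodule.mem_map.1 hw
      simp only [TensorProduct.mk_apply, LinearMap.mulLeft_apply,
        LinearMap.mulRight_apply]
      obtain ⟨r, hr⟩ := Submodule.mem_span_singleton.1
        (CTAbetaM hQs hα hγ hβ him1 hNi hm)
      obtain ⟨s, hs⟩ := Submodule.mem_span_singleton.1
        (CTANgamma hQs hα hγ hβ hip2 hNi1 hn)
      rw [← hr, ← hs, ← TensorProduct.smul_tmul', TensorProduct.tmul_smul]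
      exact Submodule.smul_mem _ _ (Submodule.smul_mem _ _
        (Submodule.mem_span_singleton_self _))
    obtain ⟨Ac, hAc⟩ := Submodule.mem_span_singleton.1 (hfin hkr)
    exact ⟨Ac, hAc.symm⟩
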